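/- arXiv:1812.07133 — 7 statements merged into one kernel-verified Lean document; each statement's English description precedes it below -/
import Mathlib

section
/- Let A be a unital associative (not necessarily commutative) algebra over a characteristic-zero field (more generally, a ℚ-algebra). For all a_1, …, a_m ∈ A and every k ∈ ℕ, (a_1 + a_2 + ⋯ + a_m)^k = Σ_{α ∈ ℕ^m, |α| = k} (k!/α!) · a^α, where a^α = a_1^{α_1} × a_2^{α_2} × ⋯ × a_m^{α_m} is the symmetrized product, α! = α_1!⋯α_m! and |α| = α_1 + ⋯ + α_m. -/
open Finset

/-- The symmetrized product of a list of elements of an algebra `A`: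
`(1/N!) ∑_{σ ∈ S_N} a_{σ(1)} ⋯ a_{σ(N)}`. -/
noncomputable def symProd (𝕜 : Type*) {A : Type*} [Field 𝕜] [Ring A] [Algebra 𝕜 A]
    (l : List A) : A :=
  (l.length.factorial : 𝕜)⁻¹ •
    ∑ σ : Equiv.Perm (Fin l.length), (List.ofFn fun i => l.get (σ i)).prod

/-- `symPow 𝕜 a α` is the symmetrized product `a_1^{α_1} × ⋯ × a_m^{α_m}`,
i.e. the symmetrized product of `α i` copies of `a i` for each `i`. -/
noncomputable def symPow (𝕜 : Type*) {A : Type*} [Field 𝕜] [Ring A] [Algebra 𝕜 A]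
    {m : ℕ} (a : Fin m → A) (α : Fin m → ℕ) : A :=
  symProd 𝕜 ((List.finRange m).flatMap fun i => List.replicate (α i) (a i))

/-- The fiber count function of `v : Fin k → Fin m`. -/
private def symFC {k m : ℕ} (v : Fin k → Fin m) : Fin m → ℕ :=
  fun i => (Finset.univ.filter fun j => v j = i).card

private lemma symFC_count_ofFn {m k : ℕ} (f : Fin k → Fin m) (i : Fin m) :
    (List.ofFn f).count i = symFC f i := by
  induction k with
  | zero => simp [symFC]
  | succ n ih =>
    rw [List.ofFn_succ, List.count_cons, ih]
    simp only [symFC, Finset.card_filter, Fin.sum_univ_succ]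
    by_cases h : f 0 = i <;> simp [h, beq_iff_eq, add_comm]

/-- Permutations carrying `u` to `v` correspond to families of fiber bijections. -/
private def permFiberEquiv {N : ℕ} {β : Type*} [DecidableEq β] (u v : Fin N → β) :
    {σ : Equiv.Perm (Fin N) // u ∘ σ = v} ≃ ∀ b : β, ({j // v j = b} ≃ {j // u j = b}) where
  toFun σ b :=
    { toFun := fun x => ⟨σ.1 x.1, (congrFun σ.2 x.1).trans x.2⟩
      invFun := fun y => ⟨σ.1.symm y.1, by
        have h := (congrFun σ.2 (σ.1.symm y.1)).symm
        simp only [Function.comp_apply, Equiv.apply_symm_apply] at h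
        exact h.trans y.2⟩
      left_inv := fun x => by simp
      right_inv := fun y => by simp }
  invFun e := ⟨(Equiv.sigmaFiberEquiv v).symm.trans
      ((Equiv.sigmaCongrRight e).trans (Equiv.sigmaFiberEquiv u)),
    by funext x; exact (e (v x) ⟨x, rfl⟩).2⟩
  left_inv σ := by
    apply Subtype.ext; apply Equiv.ext; intro x; rfl
  right_inv e := by
    funext b; apply Equiv.ext; intro x
    apply Subtype.ext
    obtain ⟨x, hx⟩ := x
    subst hx
    rfl

private lemma card_perm_filter {N m : ℕ} (u v : Fin N → Fin m) :
    (Finset.univ.filter fun σ : Equiv.Perm (Fin N) => u ∘ σ = v).card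
      = ∏ i : Fin m, Fintype.card ({j // v j = i} ≃ {j // u j = i}) := by
  rw [← Fintype.card_subtype, Fintype.card_congr (permFiberEquiv u v), Fintype.card_pi]

private lemma key_card {N m : ℕ} (u v : Fin N → Fin m) :
    (Finset.univ.filter fun σ : Equiv.Perm (Fin N) => u ∘ σ = v).card
      = if symFC v = symFC u then ∏ i, (symFC u i).factorial else 0 := by
  rw [card_perm_filter]
  split_ifs with h
  · refine Finset.prod_congr rfl fun i _ => ?_
    have hc : Fintype.card {j // v j = i} = Fintype.card {j // u j = i} := by
      simp only [Fintype.card_subtype]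
      exact congrFun h i
    rw [Fintype.card_equiv (Fintype.equivOfCardEq hc), Fintype.card_subtype]
    exact congrArg Nat.factorial (congrFun h i)
  · have : ∃ i, symFC v i ≠ symFC u i := by
      by_contra hc; push_neg at hc; exact h (funext hc)
    obtain ⟨i, hi⟩ := this
    refine Finset.prod_eq_zero (Finset.mem_univ i) ?_
    rw [Fintype.card_eq_zero_iff]
    constructor
    intro e
    refine hi ?_
    have := Fintype.card_congr e
    simpa only [Fintype.card_subtype, symFC] using this

private lemma sum_perm_comp {N m : ℕ} {M : Type*} [AddCommMonoid M] (u : Fin N → Fin m)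
    (F : (Fin N → Fin m) → M) :
    ∑ σ : Equiv.Perm (Fin N), F (u ∘ σ)
      = ∑ v ∈ Finset.univ.filter fun v : Fin N → Fin m => symFC v = symFC u,
          (∏ i, (symFC u i).factorial) • F v := by
  classical
  have h1 : ∑ σ : Equiv.Perm (Fin N), F (u ∘ σ)
      = ∑ v : Fin N → Fin m, ∑ σ ∈ Finset.univ.filter
          (fun σ : Equiv.Perm (Fin N) => u ∘ ⇑σ = v), F (u ∘ σ) :=
    (Finset.sum_fiberwise_of_maps_to
      (g := fun σ : Equiv.Perm (Fin N) => u ∘ ⇑σ)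
      (fun σ _ => Finset.mem_univ _) (fun σ => F (u ∘ σ))).symm
  rw [h1]
  have h2 : ∀ v : Fin N → Fin m,
      (∑ σ ∈ Finset.univ.filter (fun σ : Equiv.Perm (Fin N) => u ∘ ⇑σ = v), F (u ∘ σ))
        = if symFC v = symFC u then (∏ i, (symFC u i).factorial) • F v else 0 := by
    intro v
    rw [Finset.sum_congr rfl (fun σ hσ => by rw [(Finset.mem_filter.mp hσ).2]),
      Finset.sum_const, key_card, ite_smul, zero_smul]
  simp only [h2]
  rw [Finset.sum_filter]

private lemma sum_pow_expand {A : Type*} [Ring A] {m : ℕ} (a : Fin m → A) (k : ℕ) :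
    (∑ i, a i) ^ k = ∑ f : Fin k → Fin m, (List.ofFn (a ∘ f)).prod := by
  induction k with
  | zero => simp
  | succ n ih =>
    rw [pow_succ', ih, Finset.sum_mul_sum]
    refine (Fintype.sum_prod_type
      (fun p : Fin m × (Fin n → Fin m) => a p.1 * (List.ofFn (a ∘ p.2)).prod)).symm.trans ?_
    refine Fintype.sum_equiv (Fin.consEquiv fun _ : Fin (n+1) => Fin m) _ _ fun p => ?_
    have hc : a ∘ (Fin.consEquiv fun _ : Fin (n+1) => Fin m) p = Fin.cons (a p.1) (a ∘ p.2) := by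
      funext j
      refine Fin.cases rfl (fun j => rfl) j
    rw [hc, List.ofFn_cons, List.prod_cons]

private lemma symProd_ofFn {A : Type*} [Ring A] [Algebra ℚ A] {n : ℕ} (g : Fin n → A) :
    symProd ℚ (List.ofFn g)
      = ((n.factorial : ℚ))⁻¹ • ∑ σ : Equiv.Perm (Fin n), (List.ofFn (g ∘ σ)).prod := by
  unfold symProd
  have h : (List.ofFn g).length = n := List.length_ofFn
  congr 1
  · rw [h]
  · refine Fintype.sum_equiv ((finCongr h).permCongr) _ _ fun σ => ?_
    congr 1
    apply List.ext_getElem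
    · simp
    · intro j h1 h2
      simp only [List.getElem_ofFn, List.get_ofFn, Function.comp_apply,
        Equiv.permCongr_apply, finCongr_apply, finCongr_symm]
      congr 1

private def symIdx {m : ℕ} (α : Fin m → ℕ) : List (Fin m) :=
  (List.finRange m).flatMap fun i => List.replicate (α i) i

private lemma symIdx_length {m : ℕ} (α : Fin m → ℕ) : (symIdx α).length = ∑ i, α i := by
  simp [symIdx, List.length_flatMap, Fin.sum_univ_def, Function.comp_def]

private lemma symIdx_count {m : ℕ} (α : Fin m → ℕ) (i : Fin m) : (symIdx α).count i = α i := by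
  rw [symIdx, List.count_flatMap]
  have : ∀ j : Fin m, (List.count i ∘ fun j => List.replicate (α j) j) j
      = if j = i then α j else 0 := by
    intro j
    rcases eq_or_ne j i with rfl | hne
    · simp
    · simp only [Function.comp_apply, if_neg hne]
      exact List.count_eq_zero_of_not_mem (by simp [List.mem_replicate, hne.symm])
  rw [List.map_congr_left fun j _ => this j]
  rw [← Fin.sum_univ_def]
  simp

private lemma symIdx_map {A : Type*} {m : ℕ} (a : Fin m → A) (α : Fin m → ℕ) :
    ((List.finRange m).flatMap fun i => List.replicate (α i) (a i)) = (symIdx α).map a := by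
  rw [symIdx, List.map_flatMap]
  simp [List.map_replicate]

private lemma symIdx_ofFn {m k : ℕ} (α : Fin m → ℕ) (h : (symIdx α).length = k) :
    List.ofFn (fun j : Fin k => (symIdx α).get (Fin.cast h.symm j)) = symIdx α := by
  conv_rhs => rw [← List.ofFn_get (symIdx α)]
  exact (List.ofFn_congr h _).symm

/-- Multinomial expansion via symmetrized products in a (noncommutative) ℚ-algebra:
`(a_1 + ⋯ + a_m)^k = ∑_{|α| = k} (k!/α!) a^α`. -/
theorem stmt0 {A : Type*} [Ring A] [Algebra ℚ A] {m : ℕ} (a : Fin m → A) (k : ℕ) :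
    (∑ i, a i) ^ k =
      ∑ α ∈ (Fintype.piFinset fun _ : Fin m => Finset.range (k + 1)).filter
          (fun α => ∑ i, α i = k),
        ((k.factorial : ℚ) / ∏ i, ((α i).factorial : ℚ)) • symPow ℚ a α := by
  classical
  have hmem : ∀ v : Fin k → Fin m,
      symFC v ∈ (Fintype.piFinset fun _ : Fin m => Finset.range (k + 1)).filter
        (fun α => ∑ i, α i = k) := by
    intro v
    rw [Finset.mem_filter]
    constructor
    · rw [Fintype.mem_piFinset]
      intro i
      rw [Finset.mem_range, Nat.lt_succ_iff]
      calc symFC v i ≤ (Finset.univ : Finset (Fin k)).card := Finset.card_filter_le _ _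
        _ = k := by simp
    · have := Finset.card_eq_sum_card_fiberwise
        (f := v) (s := Finset.univ) (t := Finset.univ) (fun j _ => Finset.mem_univ (v j))
      simpa [symFC] using this.symm
  rw [sum_pow_expand]
  rw [← Finset.sum_fiberwise_of_maps_to (g := symFC) (fun v _ => hmem v)
    (fun v => (List.ofFn (a ∘ v)).prod)]
  refine Finset.sum_congr rfl fun α hα => ?_
  obtain ⟨hα1, hα2⟩ := Finset.mem_filter.mp hα
  have hlen : (symIdx α).length = k := (symIdx_length α).trans hα2
  set u : Fin k → Fin m := fun j => (symIdx α).get (Fin.cast hlen.symm j) with hu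
  have hofn : List.ofFn u = symIdx α := symIdx_ofFn α hlen
  have hfc : symFC u = α := by
    funext i
    rw [← symFC_count_ofFn, hofn, symIdx_count]
  have hsp : symPow ℚ a α = (k.factorial : ℚ)⁻¹ •
      ∑ σ : Equiv.Perm (Fin k), (fun v => (List.ofFn (a ∘ v)).prod) (u ∘ σ) := by
    rw [symPow, symIdx_map, ← hofn, List.map_ofFn, symProd_ofFn]
    exact congrArg _ (Finset.sum_congr rfl fun σ _ => rfl)
  rw [hsp, sum_perm_comp u (fun v => (List.ofFn (a ∘ v)).prod), hfc]
  have h1 : (k.factorial : ℚ) ≠ 0 := Nat.cast_ne_zero.mpr k.factorial_ne_zero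
  have h2 : (∏ i, ((α i).factorial : ℚ)) ≠ 0 :=
    Finset.prod_ne_zero_iff.mpr fun i _ => Nat.cast_ne_zero.mpr (α i).factorial_ne_zero
  rw [Finset.sum_congr rfl (fun v _ => (Nat.cast_smul_eq_nsmul ℚ _ _).symm),
    ← Finset.smul_sum, smul_smul, smul_smul]
  have hcoef : (k.factorial : ℚ) / (∏ i, ((α i).factorial : ℚ)) *
      (k.factorial : ℚ)⁻¹ * ((∏ i, (α i).factorial : ℕ) : ℚ) = 1 := by
    push_cast
    field_simp
  rw [hcoef, one_smul]
end

section
/- Let Ω ⊆ 𝕂^{m+1} be an open convex set and let f : Ω → A be continuously differentiable with Df = 0 on Ω. Then for all v, w ∈ Ω, f(v) − f(w) = Σ_{k=1}^m (ζ_k(v) − ζ_k(w)) · ∫_0^1 (∂f/∂v_k)(t v + (1−t) w) dt, where the integral is the Bochner/Riemann integral of the A-valued function t ↦ (∂f/∂v_k)(t v + (1−t) w) on [0,1]. -/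
/-- The Fueter variable `ζ_k(v) = v_k·1 − v_0·e_k` associated with the generators `e`. -/
def zeta {𝕜 A : Type*} [CommRing 𝕜] [Ring A] [Algebra 𝕜 A] {m : ℕ}
    (e : Fin m → A) (k : Fin m) (v : Fin (m + 1) → 𝕜) : A :=
  v k.succ • (1 : A) - v 0 • e k

/-- Key algebraic identity: if the Cauchy–Fueter combination of `L` vanishes, then
`L (v - w)` is expressible via the Fueter-variable differences. -/
theorem cf_lin_id {𝕜 A : Type*} [RCLike 𝕜] [NormedRing A] [NormedAlgebra 𝕜 A] {m : ℕ}
    (e : Fin m → A) (L : (Fin (m + 1) → 𝕜) →L[𝕜] A)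
    (hD : L (Pi.single 0 1) + ∑ k : Fin m, e k * L (Pi.single k.succ 1) = 0)
    (v w : Fin (m + 1) → 𝕜) :
    L (v - w) = ∑ k : Fin m,
      (zeta e k v - zeta e k w) * L (Pi.single k.succ 1) := by
  have hu : ∀ u : Fin (m+1) → 𝕜, L u = ∑ j, u j • L (Pi.single j 1) := by
    intro u
    conv_lhs => rw [← Finset.univ_sum_single u]
    rw [map_sum]
    refine Finset.sum_congr rfl fun j _ => ?_
    rw [← L.map_smul]
    congr 1
    simp [← Pi.single_smul, smul_eq_mul]
  have h0 : L (Pi.single 0 1) = -∑ k : Fin m, e k * L (Pi.single k.succ 1) :=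
    eq_neg_of_add_eq_zero_left hD
  rw [hu, Fin.sum_univ_succ, h0]
  rw [smul_neg, Finset.smul_sum, neg_add_eq_sub, ← Finset.sum_sub_distrib]
  refine Finset.sum_congr rfl fun k _ => ?_
  simp only [zeta, sub_sub_sub_comm, ← sub_smul, Pi.sub_apply, sub_mul, smul_mul_assoc,
    one_mul, mul_smul_comm]

/-- Fundamental integral representation: if `f` is `C¹` on an open convex set `Ω` and
`Df = 0` on `Ω` (Cauchy–Fueter operator), then
`f(v) − f(w) = ∑_k (ζ_k(v) − ζ_k(w)) ∫_0^1 ∂f/∂v_k(t v + (1−t) w) dt`. -/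
theorem stmt2 {𝕜 A : Type*} [RCLike 𝕜] [NormedRing A] [NormedAlgebra 𝕜 A]
    [NormedAlgebra ℝ A] [IsScalarTower ℝ 𝕜 A] [CompleteSpace A] {m : ℕ}
    (e : Fin m → A) (Ω : Set (Fin (m + 1) → 𝕜)) (hΩ : IsOpen Ω) (hconv : Convex ℝ Ω)
    (f : (Fin (m + 1) → 𝕜) → A) (hf : ContDiffOn 𝕜 1 f Ω)
    (hD : ∀ v ∈ Ω,
      fderiv 𝕜 f v (Pi.single 0 1) +
        ∑ k : Fin m, e k * fderiv 𝕜 f v (Pi.single k.succ 1) = 0)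
    (v w : Fin (m + 1) → 𝕜) (hv : v ∈ Ω) (hw : w ∈ Ω) :
    f v - f w = ∑ k : Fin m,
      (zeta e k v - zeta e k w) *
        ∫ t in (0:ℝ)..1,
          fderiv 𝕜 f (t • v + (1 - t) • w) (Pi.single k.succ 1) := by
  set γ : ℝ → (Fin (m + 1) → 𝕜) := fun t => t • v + (1 - t) • w with hγ
  have hmem : ∀ t ∈ Set.Icc (0:ℝ) 1, γ t ∈ Ω := fun t ht =>
    hconv hv hw ht.1 (by linarith [ht.2]) (by ring)
  have hγcont : Continuous γ := by fun_prop
  have hfd : ∀ x ∈ Ω, HasFDerivAt f (fderiv 𝕜 f x) x := fun x hx =>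
    (((hf.differentiableOn one_ne_zero) x hx).differentiableAt (hΩ.mem_nhds hx)).hasFDerivAt
  have hcont : ContinuousOn (fun x => fderiv 𝕜 f x) Ω :=
    hf.continuousOn_fderiv_of_isOpen hΩ le_rfl
  have hγd : ∀ t : ℝ, HasDerivAt γ (v - w) t := by
    intro t
    have h1 : HasDerivAt (fun t : ℝ => t • v) ((1:ℝ) • v) t :=
      (hasDerivAt_id t).smul_const v
    have h2 : HasDerivAt (fun t : ℝ => (1 - t) • w) ((-1:ℝ) • w) t := by
      simpa using ((hasDerivAt_id t).const_sub 1).smul_const w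
    have h3 := h1.add h2
    rw [one_smul, neg_one_smul, ← sub_eq_add_neg] at h3
    exact h3
  have hgd : ∀ t ∈ Set.uIcc (0:ℝ) 1,
      HasDerivAt (fun t => f (γ t)) ((fderiv 𝕜 f (γ t)) (v - w)) t := by
    intro t ht
    rw [Set.uIcc_of_le (by norm_num)] at ht
    exact ((hfd _ (hmem t ht)).restrictScalars ℝ).comp_hasDerivAt t (hγd t)
  -- continuity of the composed derivative on [0,1]
  have hDcont : ContinuousOn (fun t => (fderiv 𝕜 f (γ t) : (Fin (m+1) → 𝕜) →L[𝕜] A))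
      (Set.Icc (0:ℝ) 1) :=
    hcont.comp hγcont.continuousOn hmem
  have hint : ∀ u : Fin (m+1) → 𝕜,
      IntervalIntegrable (fun t => fderiv 𝕜 f (γ t) u) MeasureTheory.volume 0 1 := by
    intro u
    apply ContinuousOn.intervalIntegrable
    rw [Set.uIcc_of_le (by norm_num : (0:ℝ) ≤ 1)]
    exact hDcont.clm_apply continuousOn_const
  have hftc : (∫ t in (0:ℝ)..1, (fderiv 𝕜 f (γ t)) (v - w)) = f v - f w := by
    have := intervalIntegral.integral_eq_sub_of_hasDerivAt hgd (hint (v - w))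
    rw [this]
    congr 1 <;> simp [hγ]
  rw [← hftc]
  have heq : (∫ t in (0:ℝ)..1, (fderiv 𝕜 f (γ t)) (v - w)) =
      ∫ t in (0:ℝ)..1, ∑ k : Fin m,
        (zeta e k v - zeta e k w) * fderiv 𝕜 f (γ t) (Pi.single k.succ 1) := by
    refine intervalIntegral.integral_congr fun t ht => ?_
    rw [Set.uIcc_of_le (by norm_num : (0:ℝ) ≤ 1)] at ht
    exact cf_lin_id e (fderiv 𝕜 f (γ t)) (hD _ (hmem t ht)) v w
  rw [heq, intervalIntegral.integral_finset_sum]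
  · refine Finset.sum_congr rfl fun k _ => ?_
    have := (ContinuousLinearMap.mul ℝ A (zeta e k v - zeta e k w)).intervalIntegral_comp_comm
      (hint (Pi.single k.succ 1))
    simp only [ContinuousLinearMap.mul_apply', hγ] at this ⊢
    exact this
  · intro k _
    apply ContinuousOn.intervalIntegrable
    rw [Set.uIcc_of_le (by norm_num : (0:ℝ) ≤ 1)]
    exact continuousOn_const.mul (hDcont.clm_apply continuousOn_const)
end

section
/- For every multi-index α ∈ ℕ^m, the Fueter monomial v ↦ ζ(v)^α (the symmetrized product of α_1 copies of ζ_1(v), …, α_m copies of ζ_m(v)) is in the kernel of the Cauchy–Fueter operator: D(ζ^α) = 0 identically on 𝕂^{m+1}. More generally, for every fixed w ∈ 𝕂^{m+1} the shifted Fueter monomial v ↦ (ζ(v) − ζ(w))^α, the symmetrized product of α_k copies of ζ_k(v) − ζ_k(w), satisfies D((ζ − ζ(w))^α) = 0 identically; hence every Fueter polynomial (an A-linear combination Σ_α (ζ(v) − ζ(w))^α c_α with coefficients c_α ∈ A on the right) is in the kernel of D. -/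
/-- The Cauchy–Fueter operator `Df = ∂f/∂v_0 + ∑_k e_k ∂f/∂v_k`. -/
noncomputable def cauchyFueter (𝕜 : Type*) {A : Type*} [RCLike 𝕜] [NormedRing A]
    [NormedAlgebra 𝕜 A] {m : ℕ} (e : Fin m → A)
    (f : (Fin (m + 1) → 𝕜) → A) (v : Fin (m + 1) → 𝕜) : A :=
  fderiv 𝕜 f v (Pi.single 0 1) + ∑ k : Fin m, e k * fderiv 𝕜 f v (Pi.single k.succ 1)


section Aux
variable {𝕜 A : Type*} [RCLike 𝕜] [NormedRing A] [NormedAlgebra 𝕜 A] {m : ℕ}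

/-- `zeta e k` as a continuous linear map. -/
noncomputable def zetaL (e : Fin m → A) (k : Fin m) : (Fin (m + 1) → 𝕜) →L[𝕜] A :=
  (ContinuousLinearMap.proj k.succ).smulRight (1 : A) -
    (ContinuousLinearMap.proj 0).smulRight (e k)

lemma zetaL_apply (e : Fin m → A) (k : Fin m) (u : Fin (m+1) → 𝕜) :
    zetaL e k u = zeta e k u := rfl

lemma hasFDerivAt_zeta (e : Fin m → A) (k : Fin m) (v : Fin (m+1) → 𝕜) :
    HasFDerivAt (fun u => zeta e k u) (zetaL (𝕜 := 𝕜) e k) v := by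
  have := (zetaL (𝕜 := 𝕜) e k).hasFDerivAt (x := v)
  simpa [funext fun u => (zetaL_apply (𝕜 := 𝕜) e k u)] using this

lemma zetaL_single_zero (e : Fin m → A) (k : Fin m) :
    zetaL (𝕜 := 𝕜) e k (Pi.single 0 1) = -(e k) := by
  simp [zetaL, Pi.single_apply, Fin.succ_ne_zero]

lemma zetaL_single_succ (e : Fin m → A) (k j : Fin m) :
    zetaL (𝕜 := 𝕜) e k (Pi.single j.succ 1) = if k = j then 1 else 0 := by
  simp only [zetaL, ContinuousLinearMap.coe_sub', Pi.sub_apply,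
    ContinuousLinearMap.smulRight_apply, ContinuousLinearMap.proj_apply, Pi.single_apply,
    (Fin.succ_ne_zero j).symm, Fin.succ_inj, if_false, zero_smul, sub_zero]
  split_ifs <;> simp

lemma zeta_sub (e : Fin m → A) (k : Fin m) (u w : Fin (m+1) → 𝕜) :
    zeta e k (u - w) = zeta e k u - zeta e k w := by
  simp only [zeta, Pi.sub_apply, sub_smul]
  abel

lemma comm_zeta (e : Fin m → A) (x : A) (b : Fin m) (v : Fin (m+1) → 𝕜) :
    x * zeta e b v - zeta e b v * x = v 0 • (e b * x - x * e b) := by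
  simp only [zeta, mul_sub, sub_mul, mul_smul_comm, smul_mul_assoc, mul_one, one_mul, smul_sub]
  abel



/-- Commutator expansion along a product of a list. -/
lemma comm_expand {ι : Type*} (x : A) (f : ι → A) : ∀ (l : List ι),
    x * (l.map f).prod - (l.map f).prod * x
      = ∑ p : Fin l.length,
          ((l.take ↑p).map f).prod *
            ((x * f (l.get p) - f (l.get p) * x) * ((l.drop (↑p+1)).map f).prod)
  | [] => by simp
  | a :: t => by
    have ih := comm_expand x f t
    simp only [List.length_cons]
    rw [Fin.sum_univ_succ]
    have h2 : (∑ p : Fin t.length,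
        (((a :: t).take ↑(p.succ)).map f).prod *
          ((x * f ((a :: t).get p.succ) - f ((a :: t).get p.succ) * x) *
            (((a :: t).drop (↑(p.succ)+1)).map f).prod))
        = f a * (x * (t.map f).prod - (t.map f).prod * x) := by
      rw [ih, Finset.mul_sum]
      refine Finset.sum_congr rfl fun p _ => ?_
      simp only [Fin.val_succ, List.take_succ_cons, List.drop_succ_cons,
        List.map_cons, List.prod_cons, mul_assoc]
      rfl
    rw [h2]
    simp only [Fin.val_zero, List.take_zero, List.map_nil, List.prod_nil, one_mul,
      List.get_cons_zero, zero_add, List.drop_succ_cons, List.drop_zero,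
      List.map_cons, List.prod_cons]
    noncomm_ring




lemma symProd_eq {n : ℕ} (l : List A) (a : Fin n → A) (h : l.length = n)
    (ha : ∀ (q : ℕ) (hq : q < l.length), l[q] = a ⟨q, h ▸ hq⟩) :
    symProd 𝕜 l = ((n.factorial : 𝕜))⁻¹ •
      ∑ σ : Equiv.Perm (Fin n), ((List.finRange n).map fun j => a (σ j)).prod := by
  subst h
  unfold symProd
  congr 1
  refine Finset.sum_congr rfl fun σ _ => ?_
  rw [List.ofFn_eq_map]
  refine congrArg List.prod (List.map_congr_left fun i _ => ?_)
  rw [List.get_eq_getElem, ha _ (σ i).isLt]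

/-- The index list of a multi-index. -/
def idxList {m : ℕ} (α : Fin m → ℕ) : List (Fin m) :=
  (List.finRange m).flatMap fun i => List.replicate (α i) i

set_option maxHeartbeats 1000000 in
lemma symPow_eq (e : Fin m → A) (α : Fin m → ℕ) (u : Fin (m+1) → 𝕜) :
    symPow 𝕜 (fun k => zeta e k u) α
      = (((idxList α).length.factorial : 𝕜))⁻¹ •
        ∑ σ : Equiv.Perm (Fin (idxList α).length),
          ((List.finRange (idxList α).length).map
            fun j => zeta e ((idxList α).get (σ j)) u).prod := by
  unfold symPow
  have hL : ((List.finRange m).flatMap fun i => List.replicate (α i) (zeta e i u))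
      = (idxList α).map (fun i => zeta e i u) := by
    rw [idxList, List.map_flatMap]
    simp [List.map_replicate]
  rw [hL]
  refine symProd_eq _ (fun i => zeta e ((idxList α).get i) u) (List.length_map _) fun q hq => ?_
  rw [List.getElem_map]
  rfl


lemma mem_take_finRange {N t : ℕ} {j : Fin N} (hj : j ∈ (List.finRange N).take t) :
    (j : ℕ) < t := by
  obtain ⟨q, hq, rfl⟩ := List.mem_iff_getElem.1 hj
  have hq' : q < t := by
    simp only [List.length_take, List.length_finRange, lt_min_iff] at hq
    exact hq.1
  simpa [List.getElem_take, List.getElem_finRange] using hq'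

lemma mem_drop_take_finRange {N t s : ℕ} {j : Fin N}
    (hj : j ∈ ((List.finRange N).take t).drop s) : s ≤ (j : ℕ) ∧ (j : ℕ) < t := by
  obtain ⟨q, hq, rfl⟩ := List.mem_iff_getElem.1 hj
  have hlen : s + q < t := by
    simp only [List.length_drop, List.length_take, List.length_finRange] at hq
    omega
  constructor
  · simp [List.getElem_drop, List.getElem_take, List.getElem_finRange]
  · simpa [List.getElem_drop, List.getElem_take, List.getElem_finRange] using hlen

lemma mem_drop_finRange {N s : ℕ} {j : Fin N} (hj : j ∈ (List.finRange N).drop s) :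
    s ≤ (j : ℕ) := by
  obtain ⟨q, hq, rfl⟩ := List.mem_iff_getElem.1 hj
  simp [List.getElem_drop, List.getElem_finRange]

end Aux

section Main
variable {𝕜 A : Type*} [RCLike 𝕜] [NormedRing A] [NormedAlgebra 𝕜 A] {m : ℕ}

lemma cauchyFueter_apply (e : Fin m → A) {f : (Fin (m+1) → 𝕜) → A}
    {D : (Fin (m+1) → 𝕜) →L[𝕜] A} {v : Fin (m+1) → 𝕜} (hf : HasFDerivAt f D v) :
    cauchyFueter 𝕜 e f v = D (Pi.single 0 1) + ∑ k : Fin m, e k * D (Pi.single k.succ 1) := by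
  unfold cauchyFueter; rw [hf.fderiv]

lemma wordSum_key (e : Fin m → A) (N : ℕ) (b : Fin N → Fin m) (v : Fin (m+1) → 𝕜) :
    ∃ D : (Fin (m+1) → 𝕜) →L[𝕜] A,
      HasFDerivAt (fun u => ∑ σ : Equiv.Perm (Fin N),
          ((List.finRange N).map fun j => zeta e (b (σ j)) u).prod) D v ∧
      D (Pi.single 0 1) + ∑ k : Fin m, e k * D (Pi.single k.succ 1) = 0 := by
  classical
  refine ⟨_, HasFDerivAt.fun_sum fun σ _ =>
      HasFDerivAt.list_prod' fun j _ => hasFDerivAt_zeta e (b (σ j)) v, ?_⟩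
  simp only [ContinuousLinearMap.sum_apply, ContinuousLinearMap.smul_apply,
      ContinuousLinearMap.smulRight_apply, smul_eq_mul, zetaL_single_zero, zetaL_single_succ,
      op_smul_eq_mul]
  have hsec : (∑ k : Fin m, e k *
      ∑ σ : Equiv.Perm (Fin N), ∑ i : Fin (List.finRange N).length,
        (List.map (fun j => zeta e (b (σ j)) v) (List.take (i : ℕ) (List.finRange N))).prod *
          ((if b (σ (List.finRange N)[i]) = k then 1 else 0) *
            (List.map (fun j => zeta e (b (σ j)) v) (List.drop (i : ℕ).succ (List.finRange N))).prod))
      = ∑ σ : Equiv.Perm (Fin N), ∑ i : Fin (List.finRange N).length,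
          e (b (σ (List.finRange N)[i])) *
            ((List.map (fun j => zeta e (b (σ j)) v) (List.take (i : ℕ) (List.finRange N))).prod *
              (List.map (fun j => zeta e (b (σ j)) v) (List.drop (i : ℕ).succ (List.finRange N))).prod) := by
    simp only [Finset.mul_sum]
    rw [Finset.sum_comm]
    refine Finset.sum_congr rfl fun σ _ => ?_
    rw [Finset.sum_comm]
    refine Finset.sum_congr rfl fun i _ => ?_
    simp only [mul_ite, ite_mul, mul_one, one_mul, mul_zero, zero_mul,
      Finset.sum_ite_eq, Finset.mem_univ, if_true]
  rw [hsec, ← Finset.sum_add_distrib]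
  simp only [← Finset.sum_add_distrib]
  have hx : ∀ P S X : A, P * (-X * S) + X * (P * S) = (X * P - P * X) * S := by
    intros; noncomm_ring
  simp only [hx, comm_expand, comm_zeta, Finset.sum_mul]
  rw [Finset.sum_comm]
  refine Finset.sum_eq_zero fun i _ => ?_
  rw [Finset.sum_comm]
  refine Finset.sum_eq_zero fun p _ => ?_
  set τJp : Fin N := (List.take (i:ℕ) (List.finRange N)).get p with hJp
  set τJi : Fin N := (List.finRange N)[i] with hJi
  have hJpv : (τJp : ℕ) = (p : ℕ) := by
    simp [hJp, List.get_eq_getElem, List.getElem_take, List.getElem_finRange]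
  have hJiv : (τJi : ℕ) = (i : ℕ) := by
    simp [hJi, List.getElem_finRange]
  have hpi : (p : ℕ) < (i : ℕ) := by
    have := p.isLt
    simp only [List.length_take, List.length_finRange, lt_min_iff] at this
    exact this.1
  have hne : τJp ≠ τJi := Fin.ne_of_val_ne (by omega)
  refine Finset.sum_ninvolution (fun σ => σ * Equiv.swap τJp τJi) (fun σ => ?_)
    (fun σ _ hcontra => ?_) (fun _ => Finset.mem_univ _)
    (fun σ => show (σ * Equiv.swap τJp τJi) * Equiv.swap τJp τJi = σ by
      rw [mul_assoc, Equiv.swap_mul_self, mul_one])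
  · simp only [Equiv.Perm.mul_apply]
    have hfront : List.map (fun j => zeta e (b (σ (Equiv.swap τJp τJi j))) v)
        (List.take (p:ℕ) (List.take (i:ℕ) (List.finRange N)))
        = List.map (fun j => zeta e (b (σ j)) v)
            (List.take (p:ℕ) (List.take (i:ℕ) (List.finRange N))) := by
      refine List.map_congr_left fun j hj => ?_
      rw [List.take_take] at hj
      have hjv := mem_take_finRange hj
      rw [Equiv.swap_apply_of_ne_of_ne (Fin.ne_of_val_ne (by omega))
        (Fin.ne_of_val_ne (by omega))]
    have hmid : List.map (fun j => zeta e (b (σ (Equiv.swap τJp τJi j))) v)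
        (List.drop ((p:ℕ)+1) (List.take (i:ℕ) (List.finRange N)))
        = List.map (fun j => zeta e (b (σ j)) v)
            (List.drop ((p:ℕ)+1) (List.take (i:ℕ) (List.finRange N))) := by
      refine List.map_congr_left fun j hj => ?_
      obtain ⟨h1, h2⟩ := mem_drop_take_finRange hj
      rw [Equiv.swap_apply_of_ne_of_ne (Fin.ne_of_val_ne (by omega))
        (Fin.ne_of_val_ne (by omega))]
    have hsuf : List.map (fun j => zeta e (b (σ (Equiv.swap τJp τJi j))) v)
        (List.drop ((i:ℕ)).succ (List.finRange N))
        = List.map (fun j => zeta e (b (σ j)) v)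
            (List.drop ((i:ℕ)).succ (List.finRange N)) := by
      refine List.map_congr_left fun j hj => ?_
      have h1 := mem_drop_finRange hj
      have h1' : (i:ℕ)+1 ≤ (j:ℕ) := by omega
      rw [Equiv.swap_apply_of_ne_of_ne (Fin.ne_of_val_ne (by omega))
        (Fin.ne_of_val_ne (by omega))]
    rw [hfront, hmid, hsuf, Equiv.swap_apply_left, Equiv.swap_apply_right]
    have hfin : ∀ (F MID SUF X Y : A),
        F * (v 0 • (X*Y - Y*X) * MID) * SUF + F * (v 0 • (Y*X - X*Y) * MID) * SUF = 0 := by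
      intro F MID SUF X Y
      have h : (v 0 • (Y*X - X*Y) : A) = - (v 0 • (X*Y - Y*X)) := by rw [← smul_neg, neg_sub]
      rw [h]; noncomm_ring
    exact hfin _ _ _ _ _
  · have hcontra' : σ * Equiv.swap τJp τJi = σ := hcontra
    have h1 : σ (Equiv.swap τJp τJi τJp) = σ τJp := by
      rw [← Equiv.Perm.mul_apply, hcontra']
    rw [Equiv.swap_apply_left] at h1
    exact hne (σ.injective h1).symm


lemma symPowShift_key (e : Fin m → A) (w : Fin (m+1) → 𝕜) (α : Fin m → ℕ) (v : Fin (m+1) → 𝕜) :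
    ∃ D : (Fin (m+1) → 𝕜) →L[𝕜] A,
      HasFDerivAt (fun u => symPow 𝕜 (fun k => zeta e k u - zeta e k w) α) D v ∧
      D (Pi.single 0 1) + ∑ k : Fin m, e k * D (Pi.single k.succ 1) = 0 := by
  obtain ⟨D, hD, h0⟩ := wordSum_key e (idxList α).length (fun i => (idxList α).get i) (v - w)
  set r : 𝕜 := ((idxList α).length.factorial : 𝕜)⁻¹ with hr
  refine ⟨(r • D).comp (ContinuousLinearMap.id 𝕜 (Fin (m+1) → 𝕜)), ?_, ?_⟩
  · have hin : HasFDerivAt (fun u : Fin (m+1) → 𝕜 => u - w)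
        (ContinuousLinearMap.id 𝕜 (Fin (m+1) → 𝕜)) v := (hasFDerivAt_id v).sub_const w
    have houter : HasFDerivAt (fun u => symPow 𝕜 (fun k => zeta e k u) α) (r • D) (v - w) := by
      have hfun : (fun u : Fin (m+1) → 𝕜 => symPow 𝕜 (fun k => zeta e k u) α)
          = fun u => r • ∑ σ : Equiv.Perm (Fin (idxList α).length),
              ((List.finRange (idxList α).length).map
                fun j => zeta e ((idxList α).get (σ j)) u).prod := by
        funext u; exact symPow_eq e α u
      rw [hfun]
      exact hD.const_smul r
    have hcomp := houter.comp v hin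
    have hfun2 : ((fun u => symPow 𝕜 (fun k => zeta e k u) α) ∘ (fun u : Fin (m+1) → 𝕜 => u - w))
        = fun u => symPow 𝕜 (fun k => zeta e k u - zeta e k w) α := by
      funext u
      simp only [Function.comp]
      congr 1
      funext k
      exact zeta_sub e k u w
    rw [← hfun2]
    exact hcomp
  · simp only [ContinuousLinearMap.coe_comp', Function.comp_apply,
      ContinuousLinearMap.coe_id', id_eq, ContinuousLinearMap.smul_apply, mul_smul_comm]
    rw [← Finset.smul_sum, ← smul_add, h0, smul_zero]

theorem stmt4' (e : Fin m → A) :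
    (∀ (α : Fin m → ℕ) (v : Fin (m + 1) → 𝕜),
      cauchyFueter 𝕜 e (fun u => symPow 𝕜 (fun k => zeta e k u) α) v = 0) ∧
    (∀ (w : Fin (m + 1) → 𝕜) (α : Fin m → ℕ) (v : Fin (m + 1) → 𝕜),
      cauchyFueter 𝕜 e (fun u => symPow 𝕜 (fun k => zeta e k u - zeta e k w) α) v = 0) ∧
    (∀ (w : Fin (m + 1) → 𝕜) (S : Finset (Fin m → ℕ)) (c : (Fin m → ℕ) → A)
        (v : Fin (m + 1) → 𝕜),
      cauchyFueter 𝕜 e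
        (fun u => ∑ α ∈ S, symPow 𝕜 (fun k => zeta e k u - zeta e k w) α * c α) v = 0) := by
  refine ⟨?_, ?_, ?_⟩
  · intro α v
    obtain ⟨D, hD, h0⟩ := wordSum_key e (idxList α).length (fun i => (idxList α).get i) v
    set r : 𝕜 := ((idxList α).length.factorial : 𝕜)⁻¹ with hr
    have hfun : (fun u : Fin (m+1) → 𝕜 => symPow 𝕜 (fun k => zeta e k u) α)
        = fun u => r • ∑ σ : Equiv.Perm (Fin (idxList α).length),
            ((List.finRange (idxList α).length).map
              fun j => zeta e ((idxList α).get (σ j)) u).prod := by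
      funext u; exact symPow_eq e α u
    have hD' : HasFDerivAt (fun u => symPow 𝕜 (fun k => zeta e k u) α) (r • D) v := by
      rw [hfun]; exact hD.const_smul r
    rw [cauchyFueter_apply e hD']
    simp only [ContinuousLinearMap.smul_apply, mul_smul_comm]
    rw [← Finset.smul_sum, ← smul_add, h0, smul_zero]
  · intro w α v
    obtain ⟨D, hD, h0⟩ := symPowShift_key e w α v
    rw [cauchyFueter_apply e hD]
    exact h0
  · intro w S c v
    choose D hD h0 using fun α => symPowShift_key e w α v
    have hsum : HasFDerivAt
        (fun u => ∑ α ∈ S, symPow 𝕜 (fun k => zeta e k u - zeta e k w) α * c α)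
        (∑ α ∈ S, (D α).smulRight (c α)) v :=
      HasFDerivAt.fun_sum fun α _ => (hD α).mul_const' (c α)
    rw [cauchyFueter_apply e hsum]
    simp only [ContinuousLinearMap.sum_apply, ContinuousLinearMap.smulRight_apply,
      smul_eq_mul, Finset.mul_sum]
    rw [Finset.sum_comm, ← Finset.sum_add_distrib]
    refine Finset.sum_eq_zero fun α hα => ?_
    have hz := h0 α
    calc D α (Pi.single 0 1) * c α + ∑ k : Fin m, e k * (D α (Pi.single k.succ 1) * c α)
        = (D α (Pi.single 0 1) + ∑ k : Fin m, e k * D α (Pi.single k.succ 1)) * c α := by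
          rw [add_mul, Finset.sum_mul]
          congr 1
          exact Finset.sum_congr rfl fun k _ => by rw [mul_assoc]
      _ = 0 := by rw [hz, zero_mul]

end Main


/-- Fueter monomials `ζ^α`, shifted Fueter monomials `(ζ − ζ(w))^α`, and
Fueter polynomials `∑_α (ζ − ζ(w))^α c_α` are all in the kernel of the
Cauchy–Fueter operator. -/
theorem stmt4 {𝕜 A : Type*} [RCLike 𝕜] [NormedRing A] [NormedAlgebra 𝕜 A] {m : ℕ}
    (e : Fin m → A) :
    (∀ (α : Fin m → ℕ) (v : Fin (m + 1) → 𝕜),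
      cauchyFueter 𝕜 e (fun u => symPow 𝕜 (fun k => zeta e k u) α) v = 0) ∧
    (∀ (w : Fin (m + 1) → 𝕜) (α : Fin m → ℕ) (v : Fin (m + 1) → 𝕜),
      cauchyFueter 𝕜 e (fun u => symPow 𝕜 (fun k => zeta e k u - zeta e k w) α) v = 0) ∧
    (∀ (w : Fin (m + 1) → 𝕜) (S : Finset (Fin m → ℕ)) (c : (Fin m → ℕ) → A)
        (v : Fin (m + 1) → 𝕜),
      cauchyFueter 𝕜 e
        (fun u => ∑ α ∈ S, symPow 𝕜 (fun k => zeta e k u - zeta e k w) α * c α) v = 0) := by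
  exact stmt4' e
end

section
/- Let R be a (possibly noncommutative) unital ℚ-algebra and let A_1, …, A_m ∈ R. In the ring of formal power series in m commuting variables X_1, …, X_m with coefficients in R, the element 1 − Σ_{k=1}^m X_k A_k is a unit, and the coefficient of X^α in its inverse equals (|α|!/α!) · A^α for every α ∈ ℕ^m, where A^α = A_1^{α_1} × ⋯ × A_m^{α_m} is the symmetrized product, α! = α_1!⋯α_m! and |α| = α_1 + ⋯ + α_m. -/
open Equiv Finset List

namespace Stmt9

variable {R : Type*} [Ring R] {m : ℕ}

/-- fiber count of a word -/
def cnt {n : ℕ} (w : Fin n → Fin m) (k : Fin m) : ℕ := ∑ i, if w i = k then 1 else 0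

/-- ordered product of `A` along a word -/
def prodW (A : Fin m → R) {n : ℕ} (w : Fin n → Fin m) : R := (List.ofFn fun i => A (w i)).prod

/-- sum of ordered products over all permutations of the word -/
noncomputable def Phi (A : Fin m → R) {n : ℕ} (w : Fin n → Fin m) : R :=
  ∑ σ : Equiv.Perm (Fin n), prodW A (w ∘ σ)

/-- sum of ordered products over all words with given letter counts -/
noncomputable def D (A : Fin m → R) (n : ℕ) (α : Fin m → ℕ) : R :=
  ∑ w : Fin n → Fin m, if cnt w = α then prodW A w else 0

lemma prodW_cons (A : Fin m → R) {n : ℕ} (k : Fin m) (w : Fin n → Fin m) :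
    prodW A (Fin.cons k w) = A k * prodW A w := by
  simp [prodW, List.ofFn_succ]

lemma prodW_snoc (A : Fin m → R) {n : ℕ} (k : Fin m) (w : Fin n → Fin m) :
    prodW A (Fin.snoc w k) = prodW A w * A k := by
  simp only [prodW, List.ofFn_succ', List.concat_eq_append, List.prod_append, List.prod_cons,
    List.prod_nil, mul_one, Fin.snoc_castSucc, Fin.snoc_last]

lemma cnt_cons {n : ℕ} (k₀ : Fin m) (w : Fin n → Fin m) (k : Fin m) :
    cnt (Fin.cons k₀ w) k = (if k₀ = k then 1 else 0) + cnt w k := by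
  simp only [cnt, Fin.sum_univ_succ, Fin.cons_zero, Fin.cons_succ]

lemma cnt_snoc {n : ℕ} (k₀ : Fin m) (w : Fin n → Fin m) (k : Fin m) :
    cnt (Fin.snoc w k₀) k = (if k₀ = k then 1 else 0) + cnt w k := by
  simp only [cnt, Fin.sum_univ_castSucc, Fin.snoc_castSucc, Fin.snoc_last]
  exact add_comm _ _

lemma cnt_succAbove {n : ℕ} (w : Fin (n + 1) → Fin m) (p : Fin (n + 1)) (k : Fin m) :
    cnt w k = (if w p = k then 1 else 0) + cnt (w ∘ p.succAbove) k := by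
  simp only [cnt, Function.comp_apply]
  exact Fin.sum_univ_succAbove (fun i => if w i = k then 1 else 0) p

lemma sum_perm_reindex {N n : ℕ} (f : Fin N → R) (h₁ h₂ : Fin n → Fin N)
    (inj₁ : Function.Injective h₁) (inj₂ : Function.Injective h₂)
    (hr : Set.range h₁ = Set.range h₂) :
    ∑ e : Equiv.Perm (Fin n), (List.ofFn fun i => f (h₁ (e i))).prod
      = ∑ e : Equiv.Perm (Fin n), (List.ofFn fun i => f (h₂ (e i))).prod := by
  have hmem : ∀ j, h₁ j ∈ Set.range h₂ := fun j => hr ▸ Set.mem_range_self j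
  have hg : ∀ j, h₂ ((Equiv.ofInjective h₂ inj₂).symm ⟨h₁ j, hmem j⟩) = h₁ j := fun j =>
    Equiv.apply_ofInjective_symm inj₂ ⟨h₁ j, hmem j⟩
  set g : Fin n → Fin n := fun j => (Equiv.ofInjective h₂ inj₂).symm ⟨h₁ j, hmem j⟩ with hgdef
  have ginj : Function.Injective g := fun a b hab => inj₁ (by rw [← hg a, ← hg b]; exact congrArg h₂ hab)
  let gE : Equiv.Perm (Fin n) := Equiv.ofBijective g (Finite.injective_iff_bijective.mp ginj)
  refine Fintype.sum_bijective (fun e : Equiv.Perm (Fin n) => gE * e)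
    (Group.mulLeft_bijective gE) _ _ fun e => ?_
  refine congrArg List.prod (congrArg List.ofFn (funext fun i => ?_))
  have : ((gE * e) : Equiv.Perm (Fin n)) i = g (e i) := rfl
  show f (h₁ (e i)) = f (h₂ ((gE * e) i))
  rw [this, hg]

lemma Phi_succ (A : Fin m → R) {n : ℕ} (w : Fin (n + 1) → Fin m) :
    Phi A w = ∑ p : Fin (n + 1), A (w p) * Phi A (w ∘ p.succAbove) := by
  rw [Phi, ← Equiv.sum_comp (Equiv.Perm.decomposeFin (n := n)).symm
      (fun σ => prodW A (w ∘ σ)), Fintype.sum_prod_type]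
  refine Finset.sum_congr rfl fun p _ => ?_
  have key : ∀ e : Equiv.Perm (Fin n),
      prodW A (w ∘ (Equiv.Perm.decomposeFin.symm (p, e)))
        = A (w p) * (List.ofFn fun i => A (w (Equiv.swap 0 p (e i).succ))).prod := by
    intro e
    show (List.ofFn fun i => A (w (Equiv.Perm.decomposeFin.symm (p, e) i))).prod = _
    rw [List.ofFn_succ, List.prod_cons]
    simp only [Equiv.Perm.decomposeFin_symm_apply_zero, Equiv.Perm.decomposeFin_symm_apply_succ]
  rw [Finset.sum_congr rfl fun e _ => key e, ← Finset.mul_sum]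
  congr 1
  have hr₁ : Set.range (fun j : Fin n => Equiv.swap 0 p j.succ) = Set.range p.succAbove := by
    rw [Fin.range_succAbove]
    ext x
    simp only [Set.mem_range, Set.mem_compl_iff, Set.mem_singleton_iff]
    constructor
    · rintro ⟨j, rfl⟩ h
      have : j.succ = Equiv.swap 0 p p := (Equiv.apply_eq_iff_eq_symm_apply _).mp h
      rw [Equiv.swap_apply_right] at this
      exact Fin.succ_ne_zero j this
    · intro hx
      have hy : Equiv.swap 0 p x ≠ 0 := by
        intro h
        apply hx
        have := (Equiv.apply_eq_iff_eq_symm_apply _).mp h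
        rwa [Equiv.symm_swap, Equiv.swap_apply_left] at this
      obtain ⟨j, hj⟩ := Fin.exists_succ_eq_of_ne_zero hy
      exact ⟨j, by rw [hj, Equiv.swap_apply_self]⟩
  have := sum_perm_reindex (fun x => A (w x)) (fun j : Fin n => Equiv.swap 0 p j.succ)
    p.succAbove ((Equiv.swap 0 p).injective.comp (Fin.succ_injective n))
    Fin.succAbove_right_injective hr₁
  rw [this]
  rfl

lemma D_succ (A : Fin m → R) {n : ℕ} (α : Fin m → ℕ) :
    D A (n + 1) α = ∑ k : Fin m, if α k = 0 then 0
      else A k * D A n (Function.update α k (α k - 1)) := by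
  rw [D, ← Equiv.sum_comp (Fin.consEquiv (fun _ : Fin (n + 1) => Fin m))
      (fun w => if cnt w = α then prodW A w else 0), Fintype.sum_prod_type]
  refine Finset.sum_congr rfl fun k _ => ?_
  have hce : ∀ w : Fin n → Fin m,
      (Fin.consEquiv (fun _ : Fin (n + 1) => Fin m)) (k, w) = Fin.cons k w := fun w => rfl
  simp only [hce]
  by_cases hk : α k = 0
  · rw [if_pos hk]
    refine Finset.sum_eq_zero fun w _ => ?_
    rw [if_neg]
    intro hc
    have := congrFun hc k
    rw [cnt_cons] at this
    simp only [hk] at this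
    simp at this
  · rw [if_neg hk, D, Finset.mul_sum]
    refine Finset.sum_congr rfl fun w _ => ?_
    have hcond : (cnt (Fin.cons k w : Fin (n+1) → Fin m) = α)
        ↔ (cnt w = Function.update α k (α k - 1)) := by
      constructor
      · intro h
        funext j
        have hj := congrFun h j
        rw [cnt_cons] at hj
        rw [Function.update_apply]
        by_cases hjk : j = k
        · subst hjk; simp at hj ⊢; omega
        · rw [if_neg hjk]; rw [if_neg (fun h' => hjk h'.symm)] at hj; omega
      · intro h
        funext j
        rw [cnt_cons, congrFun h j, Function.update_apply]
        by_cases hjk : j = k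
        · subst hjk; simp; omega
        · rw [if_neg hjk, if_neg (fun h' => hjk h'.symm)]; omega
    show (if cnt (Fin.cons k w : Fin (n+1) → Fin m) = α
        then prodW A (Fin.cons k w : Fin (n+1) → Fin m) else 0) = _
    rw [if_congr hcond rfl rfl, prodW_cons, mul_ite, mul_zero]

lemma D_succ' (A : Fin m → R) {n : ℕ} (α : Fin m → ℕ) :
    D A (n + 1) α = ∑ k : Fin m, if α k = 0 then 0
      else D A n (Function.update α k (α k - 1)) * A k := by
  rw [D, ← Equiv.sum_comp (Fin.snocEquiv (fun _ : Fin (n + 1) => Fin m))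
      (fun w => if cnt w = α then prodW A w else 0), Fintype.sum_prod_type]
  refine Finset.sum_congr rfl fun k _ => ?_
  by_cases hk : α k = 0
  · rw [if_pos hk]
    refine Finset.sum_eq_zero fun w _ => ?_
    rw [if_neg]
    intro hc
    have := congrFun hc k
    have hsnoc : cnt ((Fin.snocEquiv (fun _ : Fin (n + 1) => Fin m)) (k, w)) k
        = (if k = k then 1 else 0) + cnt w k := cnt_snoc k w k
    rw [hsnoc] at this
    simp only [hk] at this
    simp at this
  · rw [if_neg hk, D, Finset.sum_mul]
    refine Finset.sum_congr rfl fun w _ => ?_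
    have hcond : (cnt ((Fin.snocEquiv (fun _ : Fin (n + 1) => Fin m)) (k, w)) = α)
        ↔ (cnt w = Function.update α k (α k - 1)) := by
      constructor
      · intro h
        funext j
        have hj := congrFun h j
        rw [show cnt ((Fin.snocEquiv (fun _ : Fin (n + 1) => Fin m)) (k, w)) j
          = (if k = j then 1 else 0) + cnt w j from cnt_snoc k w j] at hj
        rw [Function.update_apply]
        by_cases hjk : j = k
        · subst hjk; simp at hj ⊢; omega
        · rw [if_neg hjk]; rw [if_neg (fun h' => hjk h'.symm)] at hj; omega
      · intro h
        funext j
        rw [show cnt ((Fin.snocEquiv (fun _ : Fin (n + 1) => Fin m)) (k, w)) j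
          = (if k = j then 1 else 0) + cnt w j from cnt_snoc k w j,
          congrFun h j, Function.update_apply]
        by_cases hjk : j = k
        · subst hjk; simp; omega
        · rw [if_neg hjk, if_neg (fun h' => hjk h'.symm)]; omega
    rw [if_congr hcond rfl rfl,
      show prodW A ((Fin.snocEquiv (fun _ : Fin (n + 1) => Fin m)) (k, w)) = prodW A w * A k
        from prodW_snoc A k w, ite_mul, zero_mul]

lemma group_sum {N : ℕ} (w : Fin N → Fin m) (F : Fin m → R) :
    ∑ p, F (w p) = ∑ k, (cnt w k) • F k := by
  have h1 : ∀ p, F (w p) = ∑ k, (if w p = k then (1 : ℕ) else 0) • F k := by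
    intro p
    have h2 : ∀ k, (if w p = k then (1 : ℕ) else 0) • F k = if w p = k then F k else 0 := by
      intro k; split <;> simp
    rw [Finset.sum_congr rfl fun k _ => h2 k, Finset.sum_ite_eq]
    simp
  rw [Finset.sum_congr rfl fun p _ => h1 p, Finset.sum_comm]
  refine Finset.sum_congr rfl fun k _ => ?_
  rw [← Finset.sum_smul]
  rfl

lemma Phi_eq (A : Fin m → R) : ∀ {n : ℕ} (w : Fin n → Fin m),
    Phi A w = (∏ k, (cnt w k).factorial) • D A n (cnt w) := by
  intro n
  induction n with
  | zero =>
    intro w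
    have h1 : Phi A w = 1 := by
      simp [Phi, prodW]
    have h2 : D A 0 (cnt w) = 1 := by
      rw [D]
      simp [Subsingleton.elim _ w, prodW]
    have h3 : ∀ k, cnt w k = 0 := fun k => by simp [cnt]
    rw [h1, h2]
    simp [h3]
  | succ n IH =>
    intro w
    have hcs : ∀ p : Fin (n + 1),
        cnt (w ∘ p.succAbove) = Function.update (cnt w) (w p) (cnt w (w p) - 1) := by
      intro p
      funext j
      have h := cnt_succAbove w p j
      rw [Function.update_apply]
      by_cases hj : j = w p
      · subst hj; rw [if_pos rfl] at h ⊢; omega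
      · rw [if_neg hj]; rw [if_neg (fun h' => hj h'.symm)] at h; omega
    rw [Phi_succ]
    rw [Finset.sum_congr rfl fun p _ => by rw [IH (w ∘ p.succAbove), hcs p]]
    rw [group_sum w (fun k => A k *
      ((∏ j, (Function.update (cnt w) k (cnt w k - 1) j).factorial) •
        D A n (Function.update (cnt w) k (cnt w k - 1))))]
    rw [D_succ, Finset.smul_sum]
    refine Finset.sum_congr rfl fun k _ => ?_
    by_cases hk : cnt w k = 0
    · rw [hk, zero_smul, if_pos rfl, smul_zero]
    · rw [if_neg hk]
      have hup : (fun j => (Function.update (cnt w) k (cnt w k - 1) j).factorial)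
          = Function.update (fun j => (cnt w j).factorial) k (cnt w k - 1).factorial := by
        funext j
        rw [Function.update_apply, Function.update_apply]
        by_cases hjk : j = k
        · rw [if_pos hjk, if_pos hjk]
        · rw [if_neg hjk, if_neg hjk]
      have hP : (∏ j, (cnt w j).factorial)
          = cnt w k * ∏ j, (Function.update (cnt w) k (cnt w k - 1) j).factorial := by
        have h1 : (∏ j, (Function.update (cnt w) k (cnt w k - 1) j).factorial)
            = ∏ j, Function.update (fun j => (cnt w j).factorial) k (cnt w k - 1).factorial j :=
          Finset.prod_congr rfl fun j _ => congrFun hup j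
        rw [h1, Finset.prod_update_of_mem (Finset.mem_univ k), ← Finset.erase_eq,
          ← mul_assoc, Nat.mul_factorial_pred hk,
          Finset.mul_prod_erase Finset.univ (fun j => (cnt w j).factorial) (Finset.mem_univ k)]
      rw [mul_smul_comm, smul_smul, hP]

lemma cnt_eq_count : ∀ {n : ℕ} (w : Fin n → Fin m) (k : Fin m),
    cnt w k = (List.ofFn w).count k := by
  intro n
  induction n with
  | zero => intro w k; simp [cnt]
  | succ n ih =>
    intro w k
    rw [List.ofFn_succ, List.count_cons, ← ih (fun i => w i.succ) k]
    rw [cnt, Fin.sum_univ_succ]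
    rw [show (∑ i : Fin n, if w i.succ = k then 1 else 0) = cnt (fun i => w i.succ) k from rfl]
    by_cases h : w 0 = k
    · rw [if_pos h, if_pos (by exact beq_iff_eq.mpr h)]; omega
    · rw [if_neg h, if_neg (by simpa using h)]; omega

/-- canonical word with letter counts `α` -/
def Lw (α : Fin m → ℕ) : List (Fin m) :=
  (List.finRange m).flatMap fun i => List.replicate (α i) i

lemma length_Lw (α : Fin m → ℕ) : (Lw α).length = ∑ i, α i := by
  rw [Lw, List.length_flatMap, Fin.sum_univ_def]
  congr 1
  apply List.map_congr_left
  intro i _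
  simp

lemma count_Lw (α : Fin m → ℕ) (k : Fin m) : (Lw α).count k = α k := by
  rw [Lw, List.count_flatMap]
  have h1 : (List.map (List.count k ∘ fun i => List.replicate (α i) i) (List.finRange m))
      = List.map (fun i => if i = k then α i else 0) (List.finRange m) := by
    apply List.map_congr_left
    intro i _
    simp only [Function.comp_apply, List.count_replicate]
    by_cases h : i = k
    · rw [if_pos (beq_iff_eq.mpr h), if_pos h]
    · rw [if_neg (by simpa using h), if_neg h]
  rw [h1, ← Fin.sum_univ_def, Finset.sum_ite_eq' Finset.univ k (fun i => α i)]
  simp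

lemma cnt_Lw (α : Fin m → ℕ) : cnt (Lw α).get = α := by
  funext k
  rw [cnt_eq_count, List.ofFn_get, count_Lw]

lemma Phi_cast (A : Fin m → R) {n n' : ℕ} (h : n = n') (w : Fin n' → Fin m) :
    Phi A (fun i : Fin n => w (Fin.cast h i)) = Phi A w := by
  subst h; rfl

section Algebra

variable [Algebra ℚ R]

lemma symProd_map (A : Fin m → R) (l : List (Fin m)) :
    symProd ℚ (l.map A) = ((l.length.factorial : ℚ))⁻¹ • Phi A l.get := by
  rw [symProd]
  have h : (l.map A).length = l.length := List.length_map A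
  have h2 : (∑ σ : Equiv.Perm (Fin (l.map A).length),
        (List.ofFn fun i => (l.map A).get (σ i)).prod)
      = Phi A (fun i : Fin (l.map A).length => l.get (Fin.cast h i)) := by
    refine Finset.sum_congr rfl fun σ _ => ?_
    refine congrArg List.prod (congrArg List.ofFn (funext fun i => ?_))
    show (l.map A).get (σ i) = A (l.get (Fin.cast h (σ i)))
    simp [List.get_eq_getElem, List.getElem_map]
  rw [h2, Phi_cast A h, h]

lemma symPow_eq (A : Fin m → R) (α : Fin m → ℕ) :
    symPow ℚ A α = (((∑ i, α i).factorial : ℚ))⁻¹ •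
      ((∏ k, (α k).factorial) • D A (∑ i, α i) α) := by
  have hlist : ((List.finRange m).flatMap fun i => List.replicate (α i) (A i))
      = (Lw α).map A := by
    rw [Lw, List.map_flatMap]
    congr 1
    funext i
    rw [List.map_replicate]
  rw [symPow, hlist, symProd_map, Phi_eq, cnt_Lw, length_Lw]

lemma smul_symPow (A : Fin m → R) (α : Fin m → ℕ) :
    (((∑ i, α i).factorial : ℚ) / ∏ i, ((α i).factorial : ℚ)) • symPow ℚ A α
      = D A (∑ i, α i) α := by
  rw [symPow_eq]
  rw [← Nat.cast_smul_eq_nsmul ℚ]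
  rw [smul_smul, smul_smul]
  have hP : ((∏ k, (α k).factorial : ℕ) : ℚ) = ∏ i, ((α i).factorial : ℚ) := by
    push_cast; rfl
  rw [hP]
  have hfac : ((∑ i, α i).factorial : ℚ) ≠ 0 := Nat.cast_ne_zero.mpr (Nat.factorial_ne_zero _)
  have hprod : (∏ i, ((α i).factorial : ℚ)) ≠ 0 :=
    Finset.prod_ne_zero_iff.mpr fun i _ => Nat.cast_ne_zero.mpr (Nat.factorial_ne_zero _)
  rw [show ((∑ i, α i).factorial : ℚ) / (∏ i, ((α i).factorial : ℚ))
      * ((∑ i, α i).factorial : ℚ)⁻¹ * (∏ i, ((α i).factorial : ℚ)) = 1 by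
    field_simp]
  rw [one_smul]

end Algebra

section PS

open MvPowerSeries Finsupp

/-- the claimed inverse power series -/
noncomputable def T (A : Fin m → R) : MvPowerSeries (Fin m) R :=
  fun α => D A (∑ i, α i) ⇑α

lemma coeff_T (A : Fin m → R) (α : Fin m →₀ ℕ) :
    MvPowerSeries.coeff α (T A) = D A (∑ i, α i) ⇑α := rfl

lemma D_zero_fun (A : Fin m → R) (β : Fin m → ℕ) :
    D A 0 β = if (fun _ => (0 : ℕ)) = β then 1 else 0 := by
  rw [D, Fintype.sum_unique]
  have h1 : cnt (default : Fin 0 → Fin m) = fun _ => 0 := by funext k; simp [cnt]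
  have h2 : prodW A (default : Fin 0 → Fin m) = 1 := by simp [prodW]
  rw [h1, h2]

lemma coe_sub_single (α : Fin m →₀ ℕ) (k : Fin m) :
    ((α - Finsupp.single k 1 : Fin m →₀ ℕ) : Fin m → ℕ)
      = Function.update (⇑α) k (α k - 1) := by
  funext j
  rw [Finsupp.coe_tsub, Pi.sub_apply, Function.update_apply, Finsupp.single_apply]
  by_cases h : j = k
  · subst h; simp
  · rw [if_neg h, if_neg (fun h' => h h'.symm)]; omega

lemma sum_sub_single (α : Fin m →₀ ℕ) (k : Fin m) (hk : α k ≠ 0) :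
    ∑ i, (α - Finsupp.single k 1 : Fin m →₀ ℕ) i = (∑ i, α i) - 1 := by
  have hsplit : ∑ i, (α : Fin m → ℕ) i = α k + ∑ i ∈ Finset.univ \ {k}, α i := by
    conv_lhs => rw [show (⇑α : Fin m → ℕ) = Function.update (⇑α) k (α k) from
      (Function.update_eq_self k (⇑α)).symm]
    exact Finset.sum_update_of_mem (Finset.mem_univ k) _ _
  have h1 : ∑ i, (α - Finsupp.single k 1 : Fin m →₀ ℕ) i
      = ∑ i, Function.update (⇑α) k (α k - 1) i :=
    Finset.sum_congr rfl fun i _ => by rw [coe_sub_single α k]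
  rw [h1, Finset.sum_update_of_mem (Finset.mem_univ k) (⇑α) (α k - 1)]
  omega

lemma hS_eq (A : Fin m → R) :
    (∑ k : Fin m, (X k : MvPowerSeries (Fin m) R) * C (A k))
      = ∑ k : Fin m, monomial (Finsupp.single k 1) (A k) := by
  refine Finset.sum_congr rfl fun k _ => ?_
  rw [X_def, show (C (A k) : MvPowerSeries (Fin m) R) = monomial 0 (A k) from rfl, monomial_mul_monomial]
  rw [add_zero, one_mul]

lemma coeff_T_zero (A : Fin m → R) : MvPowerSeries.coeff 0 (T A) = 1 := by
  rw [coeff_T]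
  have h0 : (∑ i, (0 : Fin m →₀ ℕ) i) = 0 := by simp
  rw [h0, D_zero_fun, if_pos]
  funext j; simp

lemma one_sub_mul_T (A : Fin m → R) :
    ((1 : MvPowerSeries (Fin m) R) - ∑ k, X k * C (A k)) * T A = 1 := by
  apply MvPowerSeries.ext; intro α
  rw [sub_mul, one_mul, map_sub, hS_eq, Finset.sum_mul, map_sum,
    Finset.sum_congr rfl fun k _ => coeff_monomial_mul α (Finsupp.single k 1) (T A) (A k),
    MvPowerSeries.coeff_one]
  by_cases hα : α = 0
  · subst hα
    rw [if_pos rfl, coeff_T_zero, Finset.sum_eq_zero fun k _ => if_neg (by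
      intro hle
      have := Finsupp.single_le_iff.mp hle
      simp at this), sub_zero]
  · rw [if_neg hα]
    have hn : ∑ i, α i ≠ 0 := by
      intro h
      apply hα
      ext j
      simpa using Finset.sum_eq_zero_iff.mp h j (Finset.mem_univ j)
    obtain ⟨n, hn'⟩ := Nat.exists_eq_succ_of_ne_zero hn
    rw [coeff_T, hn', D_succ]
    refine sub_eq_zero.mpr (Finset.sum_congr rfl fun k _ => ?_)
    by_cases hk : α k = 0
    · rw [if_pos hk, if_neg (fun hle => by
        have := Finsupp.single_le_iff.mp hle; omega)]
    · rw [if_neg hk, if_pos (Finsupp.single_le_iff.mpr (Nat.one_le_iff_ne_zero.mpr hk))]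
      congr 1
      rw [coeff_T, sum_sub_single α k hk, hn', coe_sub_single]
      rfl

lemma T_mul_one_sub (A : Fin m → R) :
    T A * ((1 : MvPowerSeries (Fin m) R) - ∑ k, X k * C (A k)) = 1 := by
  apply MvPowerSeries.ext; intro α
  rw [mul_sub, mul_one, map_sub, hS_eq, Finset.mul_sum, map_sum,
    Finset.sum_congr rfl fun k _ => coeff_mul_monomial α (Finsupp.single k 1) (T A) (A k),
    MvPowerSeries.coeff_one]
  by_cases hα : α = 0
  · subst hα
    rw [if_pos rfl, coeff_T_zero, Finset.sum_eq_zero fun k _ => if_neg (by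
      intro hle
      have := Finsupp.single_le_iff.mp hle
      simp at this), sub_zero]
  · rw [if_neg hα]
    have hn : ∑ i, α i ≠ 0 := by
      intro h
      apply hα
      ext j
      simpa using Finset.sum_eq_zero_iff.mp h j (Finset.mem_univ j)
    obtain ⟨n, hn'⟩ := Nat.exists_eq_succ_of_ne_zero hn
    rw [coeff_T, hn', D_succ']
    refine sub_eq_zero.mpr (Finset.sum_congr rfl fun k _ => ?_)
    by_cases hk : α k = 0
    · rw [if_pos hk, if_neg (fun hle => by
        have := Finsupp.single_le_iff.mp hle; omega)]
    · rw [if_neg hk, if_pos (Finsupp.single_le_iff.mpr (Nat.one_le_iff_ne_zero.mpr hk))]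
      congr 1
      rw [coeff_T, sum_sub_single α k hk, hn', coe_sub_single]
      rfl

end PS

end Stmt9

/-- In the ring of formal power series in `m` commuting variables over a
(noncommutative) unital ℚ-algebra `R`, the element `1 − ∑_k X_k A_k` is a unit and
the coefficient of `X^α` in its inverse is `(|α|!/α!) A^α` (symmetrized product). -/
theorem stmt9 {R : Type*} [Ring R] [Algebra ℚ R] {m : ℕ} (A : Fin m → R) :
    IsUnit ((1 : MvPowerSeries (Fin m) R) -
      ∑ k, MvPowerSeries.X k * MvPowerSeries.C (A k)) ∧
    ∀ α : Fin m →₀ ℕ,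
      MvPowerSeries.coeff α
          (Ring.inverse ((1 : MvPowerSeries (Fin m) R) -
            ∑ k, MvPowerSeries.X k * MvPowerSeries.C (A k)))
        = (((∑ i, α i).factorial : ℚ) / ∏ i, ((α i).factorial : ℚ)) •
            symPow ℚ A (α : Fin m → ℕ) := by
  have h1 := Stmt9.one_sub_mul_T A
  have h2 := Stmt9.T_mul_one_sub A
  set u : (MvPowerSeries (Fin m) R)ˣ :=
    ⟨(1 : MvPowerSeries (Fin m) R) -
      ∑ k, MvPowerSeries.X k * MvPowerSeries.C (A k), Stmt9.T A, h1, h2⟩ with hu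
  refine ⟨⟨u, rfl⟩, fun α => ?_⟩
  have hinv : Ring.inverse ((1 : MvPowerSeries (Fin m) R) -
      ∑ k, MvPowerSeries.X k * MvPowerSeries.C (A k)) = Stmt9.T A := by
    rw [show ((1 : MvPowerSeries (Fin m) R) -
      ∑ k, MvPowerSeries.X k * MvPowerSeries.C (A k)) = (u : MvPowerSeries (Fin m) R)
      from rfl, Ring.inverse_unit]
    rfl
  rw [hinv, Stmt9.coeff_T, ← Stmt9.smul_symPow A ⇑α]
end

section
/- Let A be a (possibly noncommutative) unital ring, and let A_k ∈ A^{n×n}, B_k ∈ A^{n×p} (k = 1, …, m), C ∈ A^{p×n}, D ∈ A^{p×p} be matrices with entries in A, with D invertible in A^{p×p}. View all matrices as matrices with entries in the ring of formal power series in m commuting variables X_1, …, X_m over A. Then the matrix 1_n − Σ_{k=1}^m X_k A_k is invertible, the matrix R = D + C·(1_n − Σ_{k=1}^m X_k A_k)^{-1}·(Σ_{k=1}^m X_k B_k) is invertible, and its inverse is R^{-1} = D^{-1} − D^{-1} C·(1_n − Σ_{k=1}^m X_k A_k^□)^{-1}·(Σ_{k=1}^m X_k B_k)·D^{-1}, where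 A_k^□ = A_k − B_k D^{-1} C. -/
/-- Entrywise embedding of a constant matrix over `A` into matrices over the ring of
formal power series in `m` commuting variables over `A`. -/
noncomputable def matC {A : Type*} [Ring A] (m : ℕ) {κ ι : Type*} (M : Matrix κ ι A) :
    Matrix κ ι (MvPowerSeries (Fin m) A) :=
  M.map (MvPowerSeries.C : A →+* MvPowerSeries (Fin m) A)

/-- `X_k · M`, the constant matrix `M` multiplied by the `k`-th formal variable. -/
noncomputable def xMul {A : Type*} [Ring A] {m : ℕ} (k : Fin m) {κ ι : Type*}
    (M : Matrix κ ι A) : Matrix κ ι (MvPowerSeries (Fin m) A) :=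
  (MvPowerSeries.X k : MvPowerSeries (Fin m) A) • matC m M

noncomputable section

open MvPowerSeries Finset

namespace Stmt10Aux

section Equiv

variable {σ R ι : Type*} [Ring R] [Fintype ι] [DecidableEq ι]

/-- View a matrix of power series as a power series of matrices. -/
def toMv (M : Matrix ι ι (MvPowerSeries σ R)) : MvPowerSeries σ (Matrix ι ι R) :=
  fun d => Matrix.of fun i j => coeff d (M i j)

theorem toMv_mul (M N : Matrix ι ι (MvPowerSeries σ R)) : toMv (M * N) = toMv M * toMv N := by
  classical
  apply MvPowerSeries.ext
  intro d
  ext i j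
  rw [coeff_mul]
  have lhs : coeff d (toMv (M * N)) i j = coeff d ((M * N) i j) := rfl
  rw [lhs, Matrix.mul_apply, map_sum]
  simp only [coeff_mul, Matrix.sum_apply, Matrix.mul_apply]
  rw [Finset.sum_comm]
  rfl

/-- Matrices over power series ≃ power series over matrices. -/
def mvMatEquiv (σ R ι : Type*) [Ring R] [Fintype ι] [DecidableEq ι] :
    Matrix ι ι (MvPowerSeries σ R) ≃+* MvPowerSeries σ (Matrix ι ι R) where
  toFun := toMv
  invFun φ := Matrix.of fun i j => (fun d => φ d i j : MvPowerSeries σ R)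
  left_inv _ := rfl
  right_inv _ := rfl
  map_add' _ _ := rfl
  map_mul' := toMv_mul

theorem cc_toMv (M : Matrix ι ι (MvPowerSeries σ R)) :
    constantCoeff (toMv M) = M.map (constantCoeff : MvPowerSeries σ R →+* R) := by
  ext i j
  rfl

theorem isUnit_of_map_cc {M : Matrix ι ι (MvPowerSeries σ R)}
    (h : IsUnit (M.map (constantCoeff : MvPowerSeries σ R →+* R))) : IsUnit M := by
  have h1 : IsUnit (mvMatEquiv σ R ι M) := by
    rw [MvPowerSeries.isUnit_iff_constantCoeff]
    show IsUnit (constantCoeff (toMv M))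
    rwa [cc_toMv]
  have h2 := h1.map (mvMatEquiv σ R ι).symm
  rwa [RingEquiv.symm_apply_apply] at h2

end Equiv

section MatCLemmas

variable {A : Type*} [Ring A] {m : ℕ}

theorem matC_mul {κ ι τ : Type*} [Fintype ι] (M : Matrix κ ι A) (N : Matrix ι τ A) :
    matC m (M * N) = matC m M * matC m N := by
  unfold matC; exact Matrix.map_mul

theorem matC_one {κ : Type*} [Fintype κ] [DecidableEq κ] :
    matC m (1 : Matrix κ κ A) = 1 := by
  unfold matC; exact Matrix.map_one _ (map_zero _) (map_one _)

theorem xMul_mul (k : Fin m) {κ ι τ : Type*} [Fintype ι] (M : Matrix κ ι A) (N : Matrix ι τ A) :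
    xMul k (M * N) = xMul k M * matC m N := by
  unfold xMul
  rw [Matrix.smul_mul, matC_mul]

theorem xMul_sub (k : Fin m) {κ ι : Type*} (M N : Matrix κ ι A) :
    xMul k (M - N) = xMul k M - xMul k N := by
  unfold xMul matC
  rw [Matrix.map_sub _ (fun a b => map_sub _ a b), smul_sub]

theorem matC_map_cc {κ ι : Type*} (M : Matrix κ ι A) :
    (matC m M).map (constantCoeff : MvPowerSeries (Fin m) A →+* A) = M := by
  ext i j
  simp [matC, Matrix.map_apply]

theorem xMulSum_map_cc {κ ι : Type*} (Mk : Fin m → Matrix κ ι A) :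
    (∑ k, xMul k (Mk k)).map (constantCoeff : MvPowerSeries (Fin m) A →+* A) = 0 := by
  ext i j
  rw [Matrix.map_apply, Matrix.sum_apply, map_sum]
  simp [xMul, matC, Matrix.map_apply, smul_eq_mul]

end MatCLemmas

/-- Core algebraic computation: inversion of a realization. -/
theorem core {T : Type*} [Ring T] {n p : Type*}
    [Fintype n] [Fintype p] [DecidableEq n] [DecidableEq p]
    (U U' : Matrix n n T) (V : Matrix n p T)
    (Cm : Matrix p n T) (Dm E : Matrix p p T)
    (hUu : IsUnit U) (hU'u : IsUnit U')
    (dE : Dm * E = 1) (eD : E * Dm = 1)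
    (hsub : V * E * Cm = U' - U) :
    IsUnit (Dm + Cm * Ring.inverse U * V) ∧
      Ring.inverse (Dm + Cm * Ring.inverse U * V)
        = E - E * Cm * Ring.inverse U' * V * E := by
  have h1 : U * Ring.inverse U = 1 := Ring.mul_inverse_cancel U hUu
  have h2 : Ring.inverse U * U = 1 := Ring.inverse_mul_cancel U hUu
  have h3 : U' * Ring.inverse U' = 1 := Ring.mul_inverse_cancel U' hU'u
  have h4 : Ring.inverse U' * U' = 1 := Ring.inverse_mul_cancel U' hU'u
  have c1 : ∀ W : Matrix n p T, U' * (Ring.inverse U' * W) = W := fun W => by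
    rw [← Matrix.mul_assoc, h3, Matrix.one_mul]
  have c2 : ∀ W : Matrix n p T, Ring.inverse U * (U * W) = W := fun W => by
    rw [← Matrix.mul_assoc, h2, Matrix.one_mul]
  have c3 : ∀ W : Matrix n p T, Ring.inverse U' * (U' * W) = W := fun W => by
    rw [← Matrix.mul_assoc, h4, Matrix.one_mul]
  have c4 : ∀ W : Matrix n p T, U * (Ring.inverse U * W) = W := fun W => by
    rw [← Matrix.mul_assoc, h1, Matrix.one_mul]
  have c5 : ∀ W : Matrix p p T, Dm * (E * W) = W := fun W => by
    rw [← Matrix.mul_assoc, dE, Matrix.one_mul]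
  have hveC : ∀ W : Matrix n p T, V * (E * (Cm * W)) = U' * W - U * W := fun W => by
    rw [← Matrix.mul_assoc, ← Matrix.mul_assoc, hsub, Matrix.sub_mul]
  have hRS : (Dm + Cm * Ring.inverse U * V) * (E - E * Cm * Ring.inverse U' * V * E) = 1 := by
    simp only [Matrix.mul_add, Matrix.add_mul, Matrix.mul_sub, Matrix.sub_mul, Matrix.mul_assoc]
    rw [dE, c5, hveC]
    simp only [Matrix.mul_sub]
    rw [c1, c2]
    abel
  have hSR : (E - E * Cm * Ring.inverse U' * V * E) * (Dm + Cm * Ring.inverse U * V) = 1 := by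
    simp only [Matrix.mul_add, Matrix.add_mul, Matrix.mul_sub, Matrix.sub_mul, Matrix.mul_assoc]
    rw [eD, Matrix.mul_one, hveC]
    simp only [Matrix.mul_sub]
    rw [c3, c4]
    abel
  refine ⟨⟨⟨_, _, hRS, hSR⟩, rfl⟩, ?_⟩
  exact Ring.inverse_unit ⟨_, _, hRS, hSR⟩

end Stmt10Aux

end

/-- Inversion of a realization: if `D` is invertible, then
`R = D + C (1 − ∑ X_k A_k)⁻¹ (∑ X_k B_k)` is invertible with inverse
`R⁻¹ = D⁻¹ − D⁻¹ C (1 − ∑ X_k A_k^□)⁻¹ (∑ X_k B_k) D⁻¹`, where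
`A_k^□ = A_k − B_k D⁻¹ C`. -/
theorem stmt10 {A : Type*} [Ring A] {m n p : ℕ}
    (Ak : Fin m → Matrix (Fin n) (Fin n) A) (Bk : Fin m → Matrix (Fin n) (Fin p) A)
    (C : Matrix (Fin p) (Fin n) A) (D : Matrix (Fin p) (Fin p) A)
    (hD : IsUnit D) :
    IsUnit ((1 : Matrix (Fin n) (Fin n) (MvPowerSeries (Fin m) A)) -
        ∑ k, xMul k (Ak k)) ∧
    IsUnit (matC m D + matC m C *
        Ring.inverse ((1 : Matrix (Fin n) (Fin n) (MvPowerSeries (Fin m) A)) -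
          ∑ k, xMul k (Ak k)) *
        (∑ k, xMul k (Bk k))) ∧
    Ring.inverse (matC m D + matC m C *
        Ring.inverse ((1 : Matrix (Fin n) (Fin n) (MvPowerSeries (Fin m) A)) -
          ∑ k, xMul k (Ak k)) *
        (∑ k, xMul k (Bk k)))
      = matC m (Ring.inverse D) -
          matC m (Ring.inverse D) * matC m C *
            Ring.inverse ((1 : Matrix (Fin n) (Fin n) (MvPowerSeries (Fin m) A)) -
              ∑ k, xMul k (Ak k - Bk k * Ring.inverse D * C)) *
            (∑ k, xMul k (Bk k)) * matC m (Ring.inverse D) := by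
  classical
  open MvPowerSeries Stmt10Aux in
  have mapone : ∀ (Mk : Fin m → Matrix (Fin n) (Fin n) A),
      ((1 : Matrix (Fin n) (Fin n) (MvPowerSeries (Fin m) A)) - ∑ k, xMul k (Mk k)).map
        (constantCoeff : MvPowerSeries (Fin m) A →+* A) = 1 := fun Mk => by
    rw [Matrix.map_sub _ (fun a b => map_sub _ a b), xMulSum_map_cc, sub_zero,
      Matrix.map_one _ (map_zero _) (map_one _)]
  have hUu : IsUnit ((1 : Matrix (Fin n) (Fin n) (MvPowerSeries (Fin m) A)) -
      ∑ k, xMul k (Ak k)) :=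
    Stmt10Aux.isUnit_of_map_cc (by rw [mapone]; exact isUnit_one)
  have hU'u : IsUnit ((1 : Matrix (Fin n) (Fin n) (MvPowerSeries (Fin m) A)) -
      ∑ k, xMul k (Ak k - Bk k * Ring.inverse D * C)) :=
    Stmt10Aux.isUnit_of_map_cc (by rw [mapone]; exact isUnit_one)
  have dE : matC m D * matC m (Ring.inverse D) = 1 := by
    rw [← Stmt10Aux.matC_mul, Ring.mul_inverse_cancel D hD, Stmt10Aux.matC_one]
  have eD : matC m (Ring.inverse D) * matC m D = 1 := by
    rw [← Stmt10Aux.matC_mul, Ring.inverse_mul_cancel D hD, Stmt10Aux.matC_one]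
  have e1 : ∀ k : Fin m, xMul (A := A) k (Ak k - Bk k * Ring.inverse D * C)
      = xMul k (Ak k) - xMul k (Bk k) * matC m (Ring.inverse D) * matC m C := fun k => by
    rw [Stmt10Aux.xMul_sub, Stmt10Aux.xMul_mul, Stmt10Aux.xMul_mul]
  have e2 : (∑ k, xMul (A := A) k (Ak k - Bk k * Ring.inverse D * C))
      = (∑ k, xMul k (Ak k)) -
        ∑ k, xMul k (Bk k) * matC m (Ring.inverse D) * matC m C := by
    rw [← Finset.sum_sub_distrib]
    exact Finset.sum_congr rfl fun k _ => e1 k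
  have hsub : (∑ k, xMul (A := A) k (Bk k)) * matC m (Ring.inverse D) * matC m C
      = ((1 : Matrix (Fin n) (Fin n) (MvPowerSeries (Fin m) A)) -
          ∑ k, xMul k (Ak k - Bk k * Ring.inverse D * C)) -
        ((1 : Matrix (Fin n) (Fin n) (MvPowerSeries (Fin m) A)) - ∑ k, xMul k (Ak k)) := by
    rw [e2, Matrix.sum_mul, Matrix.sum_mul]
    abel
  exact ⟨hUu, Stmt10Aux.core _ _ _ _ _ _ hUu hU'u dE eD hsub⟩
end

section
/- Let c = (c_α)_{α ∈ ℕ^m} be a family of nonzero real numbers, let b ∈ A, and fix ξ ∈ A^m. Define the coefficient family of K_c(·, ξ)b by g_α = (ξ^α)† b / c_α, where ξ^α is the symmetrized product of α_1 copies of ξ_1, …, α_m copies of ξ_m. Let f = (f_α)_{α ∈ ℕ^m} be a family in A such that both (c_α g_α† f_α)_α and (ξ^α f_α)_α are absolutely summable in A. Then the reproducing property holds: [f, K_c(·, ξ)b] = Σ_{α ∈ ℕ^m} c_α · g_α† f_α = b† · (Σ_{α ∈ ℕ^m} ξ^α f_α) = b† f(ξ). -/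
/-- The reproducing property: for the coefficient family `g_α = (ξ^α)† b / c_α` of
`K_c(·,ξ)b`, one has `[f, K_c(·,ξ)b] = ∑_α c_α g_α† f_α = b† ∑_α ξ^α f_α = b† f(ξ)`. -/
theorem stmt15 {A : Type*} [NormedRing A] [NormedAlgebra ℝ A] [StarRing A]
    [NormedStarGroup A] [StarModule ℝ A] [CompleteSpace A] {m : ℕ}
    (c : (Fin m → ℕ) → ℝ) (hc : ∀ α, c α ≠ 0)
    (b : A) (ξ : Fin m → A)
    (g : (Fin m → ℕ) → A)
    (hg : ∀ α, g α = (c α)⁻¹ • (star (symPow ℝ ξ α) * b))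
    (f : (Fin m → ℕ) → A)
    (h1 : Summable fun α => ‖c α • (star (g α) * f α)‖)
    (h2 : Summable fun α => ‖symPow ℝ ξ α * f α‖) :
    ∑' α, c α • (star (g α) * f α) = star b * ∑' α, symPow ℝ ξ α * f α := by
  have key : ∀ α, c α • (star (g α) * f α) = star b * (symPow ℝ ξ α * f α) := by
    intro α
    rw [hg α, star_smul, star_mul, star_star, star_trivial, smul_mul_assoc,
      smul_smul, mul_inv_cancel₀ (hc α), one_smul, mul_assoc]
  have h2' : Summable fun α => symPow ℝ ξ α * f α :=
    Summable.of_norm h2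
  rw [← h2'.tsum_mul_left (star b)]
  exact tsum_congr key
end

section
/- Take the Drury–Arveson weights c_α = α!/|α|! (with c_0 = 1), and fix k ∈ {1, …, m}. Let f = (f_α)_{α ∈ ℕ^m} be a family in A with Σ_α c_α N(f_α)² < ∞, and define the shift (M_{ζ_k} f)_β = f_{β − ι_k} if β_k ≥ 1 and 0 otherwise, where ι_k is the k-th unit multi-index. Then M_{ζ_k} f again satisfies Σ_β c_β N((M_{ζ_k}f)_β)² < ∞, and [f, f] − [M_{ζ_k} f, M_{ζ_k} f] = Σ_{α ∈ ℕ^m} ((|α| − α_k)/(|α| + 1)) · c_α · f_α† f_α = Σ_{α ∈ ℕ^m} (d_α f_α)† (d_α f_α), where d_α = √(c_α (|α| − α_k)/(|α| + 1)) ≥ 0; in particular [f, f] − [M_{ζ_k}f, M_{ζ_k}f] is a convergent sum of elements of the form a† a, so M_{ζ_k} is a contraction for the form [·,·]. -/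
/-- The Drury–Arveson weights `c_α = α! / |α|!`. -/
noncomputable def daWeight {m : ℕ} (α : Fin m → ℕ) : ℝ :=
  (∏ i, ((α i).factorial : ℝ)) / ((∑ i, α i).factorial : ℝ)

lemma daWeight_nonneg {m : ℕ} (α : Fin m → ℕ) : 0 ≤ daWeight α := by
  apply div_nonneg
  · exact Finset.prod_nonneg fun i _ => Nat.cast_nonneg _
  · exact Nat.cast_nonneg _

lemma daWeight_shift {m : ℕ} (k : Fin m) (α : Fin m → ℕ) :
    daWeight (α + Pi.single k 1) =
      daWeight α * (((α k : ℝ) + 1) / (((∑ i, α i : ℕ) : ℝ) + 1)) := by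
  have hsum : (∑ i, (α + Pi.single k 1 : Fin m → ℕ) i) = (∑ i, α i) + 1 := by
    simp [Finset.sum_add_distrib]
  have hprod : (∏ i, (((α + Pi.single k 1 : Fin m → ℕ) i).factorial : ℝ))
      = ((α k : ℝ) + 1) * ∏ i, ((α i).factorial : ℝ) := by
    rw [← Finset.mul_prod_erase Finset.univ _ (Finset.mem_univ k),
        ← Finset.mul_prod_erase Finset.univ (fun i => ((α i).factorial : ℝ))
          (Finset.mem_univ k)]
    have h1 : ∀ i ∈ Finset.univ.erase k,
        (((α + Pi.single k 1 : Fin m → ℕ) i).factorial : ℝ) = ((α i).factorial : ℝ) := by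
      intro i hi
      simp [Pi.single_eq_of_ne (Finset.mem_erase.mp hi).1]
    rw [Finset.prod_congr rfl h1]
    have h2 : (α + Pi.single k 1 : Fin m → ℕ) k = α k + 1 := by simp
    rw [h2, Nat.factorial_succ]
    push_cast; ring
  unfold daWeight
  rw [hsum, hprod, Nat.factorial_succ]
  have h2 : ((∑ i, α i).factorial : ℝ) ≠ 0 := by positivity
  push_cast
  field_simp

/-- In the Drury–Arveson module, the shift `M_{ζ_k}` maps `W(c)` into itself and
`[f,f] − [M_{ζ_k}f, M_{ζ_k}f] = ∑_α ((|α|−α_k)/(|α|+1)) c_α f_α† f_α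
  = ∑_α (d_α f_α)† (d_α f_α)` with `d_α = √(c_α(|α|−α_k)/(|α|+1))`;
in particular `M_{ζ_k}` is a contraction for the Hermitian form. -/
theorem stmt17 {A : Type*} [NormedRing A] [NormedAlgebra ℝ A] [StarRing A]
    [NormedStarGroup A] [StarModule ℝ A] [CompleteSpace A] {m : ℕ} (k : Fin m)
    (f : (Fin m → ℕ) → A)
    (hf : Summable fun α => daWeight α * ‖f α‖ ^ 2)
    (Mf : (Fin m → ℕ) → A)
    (hMf : ∀ β, Mf β = if 1 ≤ β k then f (β - Pi.single k 1) else 0)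
    (d : (Fin m → ℕ) → ℝ)
    (hd : ∀ α, d α = Real.sqrt (daWeight α *
      ((((∑ i, α i) - α k : ℕ) : ℝ) / (((∑ i, α i) + 1 : ℕ) : ℝ)))) :
    (Summable fun β => daWeight β * ‖Mf β‖ ^ 2) ∧
    ((∑' α, daWeight α • (star (f α) * f α)) -
        (∑' β, daWeight β • (star (Mf β) * Mf β))
      = ∑' α, ((((∑ i, α i) - α k : ℕ) : ℝ) / (((∑ i, α i) + 1 : ℕ) : ℝ)) •
          (daWeight α • (star (f α) * f α))) ∧
    ((∑' α, daWeight α • (star (f α) * f α)) -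
        (∑' β, daWeight β • (star (Mf β) * Mf β))
      = ∑' α, star (d α • f α) * (d α • f α)) := by
  set e : (Fin m → ℕ) → (Fin m → ℕ) := fun α => α + Pi.single k 1 with he_def
  have he : Function.Injective e := by
    intro a b hab
    funext i
    have := congrFun hab i
    simpa [he_def] using this
  have hMfe : ∀ α, Mf (e α) = f α := by
    intro α
    rw [hMf]
    have hk : 1 ≤ (e α) k := by simp [he_def]
    rw [if_pos hk]
    congr 1
    funext i
    simp [he_def]
  have hMf0 : ∀ β ∉ Set.range e, Mf β = 0 := by
    intro β hβ
    rw [hMf, if_neg]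
    intro h
    apply hβ
    refine ⟨β - Pi.single k 1, ?_⟩
    funext i
    by_cases hik : i = k
    · subst hik
      simp [he_def, Nat.sub_add_cancel h]
    · simp [he_def, Pi.single_eq_of_ne hik]
  have hks : ∀ α : Fin m → ℕ, α k ≤ ∑ i, α i := fun α =>
    Finset.single_le_sum (fun i _ => Nat.zero_le _) (Finset.mem_univ k)
  have hle : ∀ α, daWeight (e α) ≤ daWeight α := by
    intro α
    rw [show daWeight (e α) = daWeight α * (((α k : ℝ) + 1) / (((∑ i, α i : ℕ) : ℝ) + 1))
      from daWeight_shift k α]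
    have h1 : ((α k : ℝ) + 1) / (((∑ i, α i : ℕ) : ℝ) + 1) ≤ 1 := by
      rw [div_le_one (by positivity)]
      have := hks α
      exact_mod_cast Nat.succ_le_succ this
    calc daWeight α * _ ≤ daWeight α * 1 :=
          mul_le_mul_of_nonneg_left h1 (daWeight_nonneg α)
      _ = daWeight α := mul_one _
  have hwe_nonneg : ∀ α, 0 ≤ daWeight (e α) := fun α => daWeight_nonneg _
  -- summability of the A-valued series
  have hbound : ∀ α : Fin m → ℕ, ‖daWeight α • (star (f α) * f α)‖ ≤ daWeight α * ‖f α‖ ^ 2 := by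
    intro α
    rw [norm_smul, Real.norm_of_nonneg (daWeight_nonneg α)]
    refine mul_le_mul_of_nonneg_left ?_ (daWeight_nonneg α)
    calc ‖star (f α) * f α‖ ≤ ‖star (f α)‖ * ‖f α‖ := norm_mul_le _ _
      _ = ‖f α‖ ^ 2 := by rw [norm_star]; ring
  have sA : Summable fun α => daWeight α • (star (f α) * f α) :=
    Summable.of_norm_bounded hf hbound
  have sA' : Summable fun α => daWeight (e α) • (star (f α) * f α) := by
    refine Summable.of_norm_bounded hf fun α => ?_
    rw [norm_smul, Real.norm_of_nonneg (hwe_nonneg α)]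
    calc daWeight (e α) * ‖star (f α) * f α‖
        ≤ daWeight α * ‖star (f α) * f α‖ :=
          mul_le_mul_of_nonneg_right (hle α) (norm_nonneg _)
      _ ≤ daWeight α * ‖f α‖ ^ 2 := by
          refine mul_le_mul_of_nonneg_left ?_ (daWeight_nonneg α)
          calc ‖star (f α) * f α‖ ≤ ‖star (f α)‖ * ‖f α‖ := norm_mul_le _ _
            _ = ‖f α‖ ^ 2 := by rw [norm_star]; ring
  -- first goal
  have goal1 : Summable fun β => daWeight β * ‖Mf β‖ ^ 2 := by
    rw [← Function.Injective.summable_iff he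
      (f := fun β => daWeight β * ‖Mf β‖ ^ 2) (fun β hβ => by simp [hMf0 β hβ])]
    refine Summable.of_nonneg_of_le
      (fun α => mul_nonneg (hwe_nonneg α) (by positivity)) (fun α => ?_) hf
    show daWeight (e α) * ‖Mf (e α)‖ ^ 2 ≤ daWeight α * ‖f α‖ ^ 2
    rw [hMfe]
    exact mul_le_mul_of_nonneg_right (hle α) (by positivity)
  -- reindex the shifted tsum
  have htsum_M : (∑' β, daWeight β • (star (Mf β) * Mf β))
      = ∑' α, daWeight (e α) • (star (f α) * f α) := by
    rw [← Function.Injective.tsum_eq he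
      (f := fun β => daWeight β • (star (Mf β) * Mf β))
      (fun β hβ => by by_contra h; exact hβ (by simp [hMf0 β h]))]
    exact tsum_congr fun α => by rw [hMfe]
  have hkey : ∀ α : Fin m → ℕ, daWeight α - daWeight (e α)
      = ((((∑ i, α i) - α k : ℕ) : ℝ) / (((∑ i, α i) + 1 : ℕ) : ℝ)) * daWeight α := by
    intro α
    rw [show daWeight (e α) = daWeight α * (((α k : ℝ) + 1) / (((∑ i, α i : ℕ) : ℝ) + 1))
      from daWeight_shift k α, Nat.cast_sub (hks α)]
    have hS : ((∑ i, α i : ℕ) : ℝ) + 1 ≠ 0 := by positivity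
    push_cast
    field_simp
    ring
  have goal2 : (∑' α, daWeight α • (star (f α) * f α)) -
        (∑' β, daWeight β • (star (Mf β) * Mf β))
      = ∑' α, ((((∑ i, α i) - α k : ℕ) : ℝ) / (((∑ i, α i) + 1 : ℕ) : ℝ)) •
          (daWeight α • (star (f α) * f α)) := by
    rw [htsum_M, ← Summable.tsum_sub sA sA']
    refine tsum_congr fun α => ?_
    rw [← sub_smul, hkey α, mul_smul]
  refine ⟨goal1, goal2, ?_⟩
  rw [goal2]
  refine tsum_congr fun α => ?_
  have hr : 0 ≤ daWeight α *
      ((((∑ i, α i) - α k : ℕ) : ℝ) / (((∑ i, α i) + 1 : ℕ) : ℝ)) :=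
    mul_nonneg (daWeight_nonneg α) (by positivity)
  have hdd : d α * d α = daWeight α *
      ((((∑ i, α i) - α k : ℕ) : ℝ) / (((∑ i, α i) + 1 : ℕ) : ℝ)) := by
    rw [hd α]; exact Real.mul_self_sqrt hr
  rw [star_smul, star_trivial (d α), smul_mul_smul_comm, hdd, smul_smul, mul_comm]
end
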